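/- Let γ ∈ [0,1]² be a point in the plane. Then every point q of the convex hull of {(0,0), γ, (1,1)−γ, (1,1)} in ℝ² can be written as q = α·γ + β·((1,1)−γ) for some α, β ∈ [0,1]. Consequently, for a binary predictor Ŷ with γ_a(Ŷ) = γ, every point of the polytope P_a(Ŷ) := convhull{(0,0), γ_a(Ŷ), γ_a(1−Ŷ), (1,1)} is realized as γ_a(Ỹ) of a derived predictor Ỹ with parameters p_{1,a} = α and p_{0,a} = β. -/

import Mathlib

open Set

/-- For `γ ∈ [0,1]²`, every point of the convex hull of
`{(0,0), γ, (1,1) − γ, (1,1)}` can be written as `α • γ + β • ((1,1) − γ)` with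
`α, β ∈ [0,1]`; i.e. every point of the polytope `P_a(Ŷ)` is realized as `γ_a(Ỹ)` of a
derived predictor with parameters `p_{1,a} = α`, `p_{0,a} = β`. -/
theorem convexHull_polytope_eq_derived_rates
    (γ : ℝ × ℝ) (hγ1 : γ.1 ∈ Set.Icc (0:ℝ) 1) (hγ2 : γ.2 ∈ Set.Icc (0:ℝ) 1)
    (q : ℝ × ℝ)
    (hq : q ∈ convexHull ℝ
      ({((0:ℝ),(0:ℝ)), γ, (((1:ℝ),(1:ℝ)) - γ), ((1:ℝ),(1:ℝ))} : Set (ℝ × ℝ))) :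
    ∃ α β : ℝ, α ∈ Set.Icc (0:ℝ) 1 ∧ β ∈ Set.Icc (0:ℝ) 1 ∧
      q = α • γ + β • (((1:ℝ),(1:ℝ)) - γ) := by
  set δ : ℝ × ℝ := ((1:ℝ),(1:ℝ)) - γ with hδ
  let f : (ℝ × ℝ) →ₗ[ℝ] (ℝ × ℝ) :=
    { toFun := fun p => p.1 • γ + p.2 • δ
      map_add' := by
        intro a b
        simp only [Prod.fst_add, Prod.snd_add, add_smul]
        abel
      map_smul' := by
        intro c a
        simp only [Prod.smul_fst, Prod.smul_snd, smul_smul, RingHom.id_apply, smul_add, smul_eq_mul] }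
  have hconv : Convex ℝ (f '' (Set.Icc (0:ℝ) 1 ×ˢ Set.Icc (0:ℝ) 1)) :=
    ((convex_Icc (0:ℝ) 1).prod (convex_Icc (0:ℝ) 1)).linear_image f
  have hsub : ({((0:ℝ),(0:ℝ)), γ, δ, ((1:ℝ),(1:ℝ))} : Set (ℝ × ℝ))
      ⊆ f '' (Set.Icc (0:ℝ) 1 ×ˢ Set.Icc (0:ℝ) 1) := by
    intro x hx
    have h01 : (0:ℝ) ∈ Set.Icc (0:ℝ) 1 := ⟨le_refl 0, zero_le_one⟩
    have h11 : (1:ℝ) ∈ Set.Icc (0:ℝ) 1 := ⟨zero_le_one, le_refl 1⟩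
    rcases hx with h | h | h | h
    · exact ⟨(0, 0), ⟨h01, h01⟩, by simp [f, h]; rfl⟩
    · exact ⟨(1, 0), ⟨h11, h01⟩, by simp [f, h]⟩
    · exact ⟨(0, 1), ⟨h01, h11⟩, by simp [f, h]⟩
    · refine ⟨(1, 1), ⟨h11, h11⟩, ?_⟩
      simp only [mem_singleton_iff] at h
      simp [f, hδ, h]
  have hmem : q ∈ f '' (Set.Icc (0:ℝ) 1 ×ˢ Set.Icc (0:ℝ) 1) :=
    convexHull_min hsub hconv hq
  obtain ⟨⟨α, β⟩, ⟨hα, hβ⟩, hfab⟩ := hmem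
  exact ⟨α, β, hα, hβ, hfab.symm⟩
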